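/- Let A be a symmetric n×n real matrix, X an n×n real matrix, and W a subspace of symmetric matrices containing A with XᵀB + BX ∈ W for all B ∈ W. For t ∈ ℝ, exp(tX)ᵀ A exp(tX) lies in the affine span described as follows: if XᵀAᵢ + AᵢX = Σⱼ λᵢⱼAⱼ for a basis A₁,…,A_m of W with Λ = (λᵢⱼ), then exp(tX)ᵀ Aᵢ exp(tX) = Σⱼ exp(tΛ)ᵢⱼ Aⱼ. -/

import Mathlib

set_option maxHeartbeats 1000000

open Matrix

open NormedSpace in
/-- Conjugation by exponentials as a single exponential-type series of the
"sandwich" operator `C ↦ a * C + C * b`. -/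
private theorem exp_conj_eq_tsum {𝔸 : Type*} [NormedRing 𝔸] [NormedAlgebra ℝ 𝔸]
    [CompleteSpace 𝔸] (a b C : 𝔸) :
    exp a * C * exp b =
      ∑' p : ℕ, ((Nat.factorial p : ℝ))⁻¹ •
        (((LinearMap.mulLeft ℝ a + LinearMap.mulRight ℝ b) ^ p) C) := by
  -- power expansion of the sandwich operator
  have hpow : ∀ p : ℕ, (((LinearMap.mulLeft ℝ a + LinearMap.mulRight ℝ b) ^ p) C) =
      ∑ kl ∈ Finset.HasAntidiagonal.antidiagonal p, p.choose kl.1 • (a ^ kl.1 * (C * b ^ kl.2)) := by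
    intro p
    rw [(LinearMap.commute_mulLeft_right a b).add_pow' p]
    rw [LinearMap.sum_apply]
    refine Finset.sum_congr rfl fun kl _ => ?_
    rw [LinearMap.smul_apply, Module.End.mul_apply, LinearMap.pow_mulLeft,
      LinearMap.pow_mulRight, LinearMap.mulLeft_apply, LinearMap.mulRight_apply]
  -- the two absolutely convergent series
  have hf : Summable fun l : ℕ => ‖((Nat.factorial l : ℝ))⁻¹ • a ^ l‖ :=
    norm_expSeries_summable' (𝕂 := ℝ) a
  have hg : Summable fun k : ℕ => ‖((Nat.factorial k : ℝ))⁻¹ • (C * b ^ k)‖ := by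
    refine Summable.of_nonneg_of_le (fun k => norm_nonneg _) (fun k => ?_)
      ((norm_expSeries_summable' (𝕂 := ℝ) b).mul_left ‖C‖)
    rw [norm_smul, norm_smul]
    calc ‖((Nat.factorial k : ℝ))⁻¹‖ * ‖C * b ^ k‖
        ≤ ‖((Nat.factorial k : ℝ))⁻¹‖ * (‖C‖ * ‖b ^ k‖) :=
          mul_le_mul_of_nonneg_left (norm_mul_le _ _) (norm_nonneg _)
      _ = ‖C‖ * (‖((Nat.factorial k : ℝ))⁻¹‖ * ‖b ^ k‖) := by ring
  have hCb : C * exp b = ∑' k : ℕ, ((Nat.factorial k : ℝ))⁻¹ • (C * b ^ k) := by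
    have h := ((ContinuousLinearMap.mul ℝ 𝔸) C).map_tsum
      (expSeries_summable' (𝕂 := ℝ) b)
    simp only [ContinuousLinearMap.mul_apply', _root_.map_smul] at h
    rw [exp_eq_tsum (𝕂 := ℝ)]
    exact h
  rw [mul_assoc, hCb, exp_eq_tsum (𝕂 := ℝ)]
  rw [tsum_mul_tsum_eq_tsum_sum_antidiagonal_of_summable_norm hf hg]
  refine tsum_congr fun p => ?_
  rw [hpow, Finset.smul_sum]
  refine Finset.sum_congr rfl fun kl hkl => ?_
  have hp : kl.1 + kl.2 = p := Finset.HasAntidiagonal.mem_antidiagonal.mp hkl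
  rw [smul_mul_smul_comm, ← Nat.cast_smul_eq_nsmul ℝ, smul_smul]
  congr 1
  rw [← hp, Nat.cast_add_choose]
  have h1 : ((Nat.factorial kl.1 : ℝ)) ≠ 0 := Nat.cast_ne_zero.mpr kl.1.factorial_ne_zero
  have h2 : ((Nat.factorial kl.2 : ℝ)) ≠ 0 := Nat.cast_ne_zero.mpr kl.2.factorial_ne_zero
  have h3 : ((Nat.factorial (kl.1 + kl.2) : ℝ)) ≠ 0 :=
    Nat.cast_ne_zero.mpr (kl.1 + kl.2).factorial_ne_zero
  field_simp

private theorem pow_basis {m : ℕ} {𝔸 : Type*} [AddCommGroup 𝔸] [Module ℝ 𝔸]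
    (A : Fin m → 𝔸) (T : 𝔸 →ₗ[ℝ] 𝔸) (M : Matrix (Fin m) (Fin m) ℝ)
    (h : ∀ i, T (A i) = ∑ j, M i j • A j) :
    ∀ (k : ℕ) (i : Fin m), (T ^ k) (A i) = ∑ j, (M ^ k) i j • A j := by
  intro k
  induction k with
  | zero =>
    intro i
    simp [Matrix.one_apply, ite_smul]
  | succ k ih =>
    intro i
    rw [pow_succ', Module.End.mul_apply, ih, map_sum]
    simp_rw [LinearMap.map_smul, h, Finset.smul_sum, smul_smul]
    rw [Finset.sum_comm]
    refine Finset.sum_congr rfl fun l _ => ?_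
    rw [← Finset.sum_smul, pow_succ, Matrix.mul_apply]

/-- If `Xᵀ Aᵢ + Aᵢ X = Σⱼ Λᵢⱼ Aⱼ` for a basis `A₁,…,A_m` of a space of symmetric matrices,
then `exp(tX)ᵀ Aᵢ exp(tX) = Σⱼ exp(tΛ)ᵢⱼ Aⱼ`. -/
theorem exp_conjugate_symmetric_family
    {n m : ℕ}
    (A : Fin m → Matrix (Fin n) (Fin n) ℝ)
    (hsym : ∀ i, (A i)ᵀ = A i)
    (hind : LinearIndependent ℝ A)
    (X : Matrix (Fin n) (Fin n) ℝ)
    (Λ : Matrix (Fin m) (Fin m) ℝ)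
    (hΛ : ∀ i, Xᵀ * A i + A i * X = ∑ j, Λ i j • A j)
    (t : ℝ) (i : Fin m) :
    (NormedSpace.exp (t • X))ᵀ * A i * NormedSpace.exp (t • X) =
      ∑ j, (NormedSpace.exp (t • Λ)) i j • A j := by
  rw [← Matrix.exp_transpose]
  letI : NormedRing (Matrix (Fin n) (Fin n) ℝ) := Matrix.linftyOpNormedRing
  letI : NormedAlgebra ℝ (Matrix (Fin n) (Fin n) ℝ) := Matrix.linftyOpNormedAlgebra
  letI : NormedRing (Matrix (Fin m) (Fin m) ℝ) := Matrix.linftyOpNormedRing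
  letI : NormedAlgebra ℝ (Matrix (Fin m) (Fin m) ℝ) := Matrix.linftyOpNormedAlgebra
  set L : Matrix (Fin n) (Fin n) ℝ →ₗ[ℝ] Matrix (Fin n) (Fin n) ℝ :=
    LinearMap.mulLeft ℝ ((t • X)ᵀ) + LinearMap.mulRight ℝ (t • X) with hL
  have key : NormedSpace.exp ((t • X)ᵀ) * A i * NormedSpace.exp (t • X) =
      ∑' p : ℕ, ((Nat.factorial p : ℝ))⁻¹ • ((L ^ p) (A i)) :=
    exp_conj_eq_tsum ((t • X)ᵀ) (t • X) (A i)
  rw [key]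
  -- expand powers of L in the family A
  have hbase : ∀ i', L (A i') = ∑ j, (t • Λ) i' j • A j := by
    intro i'
    have hsmul : (t • X)ᵀ * A i' + A i' * (t • X) = t • (Xᵀ * A i' + A i' * X) := by
      rw [Matrix.transpose_smul, smul_add, smul_mul_assoc, mul_smul_comm]
    rw [hL, LinearMap.add_apply, LinearMap.mulLeft_apply, LinearMap.mulRight_apply,
      hsmul, hΛ, Finset.smul_sum]
    refine Finset.sum_congr rfl fun j _ => ?_
    rw [smul_smul, Matrix.smul_apply, smul_eq_mul]
  have hlin : ∀ (p : ℕ), (L ^ p) (A i) = ∑ j, ((t • Λ) ^ p) i j • A j :=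
    fun p => pow_basis A L (t • Λ) hbase p i
  simp_rw [hlin]
  -- exchange the sum and the series
  have hsumm : Summable fun p : ℕ => ((Nat.factorial p : ℝ))⁻¹ • (t • Λ) ^ p :=
    NormedSpace.expSeries_summable' (𝕂 := ℝ) (t • Λ)
  let φ : Fin m → (Matrix (Fin m) (Fin m) ℝ →L[ℝ] Matrix (Fin n) (Fin n) ℝ) := fun j =>
    LinearMap.toContinuousLinearMap
      { toFun := fun M => M i j • A j
        map_add' := fun M N => by simp [Matrix.add_apply, add_smul]
        map_smul' := fun c M => by simp [Matrix.smul_apply, smul_smul] }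
  have hφ : ∀ j M, φ j M = M i j • A j := fun _ _ => rfl
  have hterm : ∀ p : ℕ, ((Nat.factorial p : ℝ))⁻¹ • ∑ j, ((t • Λ) ^ p) i j • A j =
      ∑ j, φ j (((Nat.factorial p : ℝ))⁻¹ • (t • Λ) ^ p) := by
    intro p
    rw [Finset.smul_sum]
    refine Finset.sum_congr rfl fun j _ => ?_
    simp only [hφ, Matrix.smul_apply, smul_smul, smul_eq_mul]
  simp_rw [hterm]
  rw [Summable.tsum_finsetSum (fun j _ => (φ j).summable hsumm)]
  have hexp : NormedSpace.exp (t • Λ) =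
      ∑' p : ℕ, ((Nat.factorial p : ℝ))⁻¹ • (t • Λ) ^ p := by
    simp only [NormedSpace.exp_eq_tsum (𝕂 := ℝ)]
  refine Finset.sum_congr rfl fun j _ => ?_
  rw [← (φ j).map_tsum hsumm, hφ, ← hexp]
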